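/- For real x, y > 0 and λ, μ > 0 with λμ = xy, R_D(λ, x+λ, y+λ) + R_D(μ, x+μ, y+μ) = R_D(0, x, y) − 3/(y √(x + y + λ + μ)). -/

import Mathlib

open MeasureTheory Real Set

noncomputable def RC (x y : ℝ) : ℝ :=
  (1/2) * ∫ t in Set.Ioi (0:ℝ), (Real.sqrt (t + x))⁻¹ * (t + y)⁻¹

noncomputable def RF (x y z : ℝ) : ℝ :=
  (1/2) * ∫ t in Set.Ioi (0:ℝ), (Real.sqrt ((t + x) * (t + y) * (t + z)))⁻¹

noncomputable def RD (x y z : ℝ) : ℝ :=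
  (3/2) * ∫ t in Set.Ioi (0:ℝ),
    (Real.sqrt ((t + x) * (t + y)))⁻¹ * ((t + z) * Real.sqrt (t + z))⁻¹

noncomputable def RJ (x y z p : ℝ) : ℝ :=
  (3/2) * ∫ t in Set.Ioi (0:ℝ),
    (Real.sqrt ((t + x) * (t + y) * (t + z)))⁻¹ * (t + p)⁻¹

noncomputable def RG (x y z : ℝ) : ℝ :=
  (1/4) * ∫ t in Set.Ioi (0:ℝ),
    (Real.sqrt ((t + x) * (t + y) * (t + z)))⁻¹ *
      (x / (t + x) + y / (t + y) + z / (t + z)) * t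


noncomputable def gg (x y t : ℝ) : ℝ :=
  (Real.sqrt (t * (t + x)))⁻¹ * ((t + y) * Real.sqrt (t + y))⁻¹

noncomputable def JJ (x y t : ℝ) : ℝ :=
  y⁻¹ * (Real.sqrt t * ((t + x) * Real.sqrt (t + x))⁻¹ * (Real.sqrt (t + y))⁻¹)

noncomputable def hh (x y t : ℝ) : ℝ :=
  -(2/y) * (Real.sqrt t * (Real.sqrt (t + x))⁻¹ * (Real.sqrt (t + y))⁻¹)

section aux
variable {x y : ℝ} (hx : 0 < x) (hy : 0 < y)

lemma gg_meas : Measurable (gg x y) := by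
  unfold gg
  fun_prop

include hx hy in
lemma JJ_contOn : ContinuousOn (JJ x y) (Ici 0) := by
  unfold JJ
  apply ContinuousOn.mul continuousOn_const
  apply ContinuousOn.mul
  apply ContinuousOn.mul Real.continuous_sqrt.continuousOn
  · apply ContinuousOn.inv₀
    · fun_prop
    · intro t ht
      have htx : 0 < t + x := by have := mem_Ici.mp ht; linarith [hx, hy]
      positivity
  · apply ContinuousOn.inv₀
    · fun_prop
    · intro t ht
      have hty : 0 < t + y := by have := mem_Ici.mp ht; linarith [hx, hy]
      positivity

include hx hy in
lemma hh_cont : ContinuousOn (hh x y) (Ici 0) := by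
  unfold hh
  apply ContinuousOn.mul continuousOn_const
  apply ContinuousOn.mul
  apply ContinuousOn.mul Real.continuous_sqrt.continuousOn
  · apply ContinuousOn.inv₀ (by fun_prop)
    intro t ht
    have htx : 0 < t + x := by have := mem_Ici.mp ht; linarith [hx, hy]
    positivity
  · apply ContinuousOn.inv₀ (by fun_prop)
    intro t ht
    have hty : 0 < t + y := by have := mem_Ici.mp ht; linarith [hx, hy]
    positivity

include hx hy in
lemma gg_int_Ioc (l : ℝ) : IntegrableOn (gg x y) (Ioc 0 l) := by
  rcases le_or_gt l 0 with h | hl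
  · rw [Ioc_eq_empty (by exact not_lt.mpr h)]; exact integrableOn_empty
  have hmaj : IntegrableOn (fun t : ℝ => t ^ (-1/2 : ℝ) * ((Real.sqrt x * (y * Real.sqrt y))⁻¹)) (Ioc 0 l) := by
    apply Integrable.mul_const
    have := intervalIntegral.intervalIntegrable_rpow' (r := -1/2) (a := 0) (b := l) (by norm_num)
    rwa [intervalIntegrable_iff_integrableOn_Ioc_of_le hl.le] at this
  apply Integrable.mono hmaj ((gg_meas (x := x) (y := y)).aestronglyMeasurable.restrict)
  rw [ae_restrict_iff' measurableSet_Ioc]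
  filter_upwards with t ht
  obtain ⟨ht0, htl⟩ := ht
  have htx : 0 < t + x := by linarith
  have hty : 0 < t + y := by linarith
  have h1 : gg x y t = (Real.sqrt t)⁻¹ * (Real.sqrt (t + x))⁻¹ * ((t + y) * Real.sqrt (t + y))⁻¹ := by
    rw [gg, Real.sqrt_mul ht0.le, mul_inv]
  have hrw : (t:ℝ) ^ (-1/2 : ℝ) = (Real.sqrt t)⁻¹ := by
    rw [Real.sqrt_eq_rpow, ← Real.rpow_neg ht0.le]
    norm_num
  rw [Real.norm_eq_abs, Real.norm_eq_abs, h1, hrw]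
  have e1 : |(Real.sqrt t)⁻¹ * (Real.sqrt (t + x))⁻¹ * ((t + y) * Real.sqrt (t + y))⁻¹|
      = (Real.sqrt t)⁻¹ * (Real.sqrt (t + x))⁻¹ * ((t + y) * Real.sqrt (t + y))⁻¹ := by
    apply abs_of_nonneg; positivity
  have e2 : |(Real.sqrt t)⁻¹ * (Real.sqrt x * (y * Real.sqrt y))⁻¹|
      = (Real.sqrt t)⁻¹ * (Real.sqrt x * (y * Real.sqrt y))⁻¹ := by
    apply abs_of_nonneg; positivity
  rw [e1, e2]
  have hb1 : (Real.sqrt (t+x))⁻¹ ≤ (Real.sqrt x)⁻¹ := by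
    apply inv_anti₀ (Real.sqrt_pos.mpr hx)
    exact Real.sqrt_le_sqrt (by linarith)
  have hb2 : ((t+y) * Real.sqrt (t+y))⁻¹ ≤ (y * Real.sqrt y)⁻¹ := by
    rw [inv_le_inv₀ (by positivity) (by positivity)]
    apply mul_le_mul (by linarith) (Real.sqrt_le_sqrt (by linarith)) (Real.sqrt_nonneg _) (by linarith)
  calc (Real.sqrt t)⁻¹ * (Real.sqrt (t+x))⁻¹ * ((t + y) * Real.sqrt (t + y))⁻¹
      ≤ (Real.sqrt t)⁻¹ * (Real.sqrt x)⁻¹ * (y * Real.sqrt y)⁻¹ := by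
        apply mul_le_mul _ hb2 (by positivity) (by positivity)
        exact mul_le_mul_of_nonneg_left hb1 (by positivity)
    _ = (Real.sqrt t)⁻¹ * (Real.sqrt x * (y * Real.sqrt y))⁻¹ := by
        rw [mul_inv]; ring
  

include hx hy in
lemma key_pointwise {t : ℝ} (ht : 0 < t) :
    |(-(x*y)/t^2)| * gg x y (x*y/t) = JJ x y t := by
  have htx : 0 < t + x := by linarith
  have hty : 0 < t + y := by linarith
  set u := x*y/t with hu
  have hupos : 0 < u := by positivity
  have hst : Real.sqrt t > 0 := Real.sqrt_pos.mpr ht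
  have hsx : Real.sqrt (t+x) > 0 := Real.sqrt_pos.mpr htx
  have hsy : Real.sqrt (t+y) > 0 := Real.sqrt_pos.mpr hty
  have hsyy : Real.sqrt y > 0 := Real.sqrt_pos.mpr hy
  have sq_t : Real.sqrt t ^ 2 = t := Real.sq_sqrt ht.le
  have sq_x : Real.sqrt (t+x) ^ 2 = t + x := Real.sq_sqrt htx.le
  have sq_y : Real.sqrt (t+y) ^ 2 = t + y := Real.sq_sqrt hty.le
  have sq_yy : Real.sqrt y ^ 2 = y := Real.sq_sqrt hy.le
  have e1 : Real.sqrt (u * (u + x)) = x * Real.sqrt y * Real.sqrt (t+y) / t := by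
    rw [show u * (u + x) = (x * Real.sqrt y * Real.sqrt (t+y) / t)^2 by
      rw [div_pow, mul_pow, mul_pow, sq_yy, sq_y, hu]; field_simp; ring]
    exact Real.sqrt_sq (by positivity)
  have e2 : Real.sqrt (u + y) = Real.sqrt y * Real.sqrt (t+x) / Real.sqrt t := by
    rw [show u + y = (Real.sqrt y * Real.sqrt (t+x) / Real.sqrt t)^2 by
      rw [div_pow, mul_pow, sq_yy, sq_x, sq_t, hu]; field_simp; ring]
    exact Real.sqrt_sq (by positivity)
  have e3 : u + y = y * (t+x) / t := by rw [hu]; field_simp; ring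
  have habs : |(-(x*y)/t^2)| = x*y/t^2 := by
    rw [abs_div, abs_neg, abs_of_nonneg (by positivity), abs_of_nonneg (by positivity)]
  rw [habs, gg, JJ, e1, e2, e3]
  field_simp
  ring_nf
  rw [sq_yy]

include hx hy in
lemma sub_image {a b : ℝ} (ha : 0 < a) (hb : 0 < b) (hab : a * b = x * y) :
    (fun t : ℝ => x*y/t) '' Ioo 0 a = Ioi b := by
  ext u
  constructor
  · rintro ⟨t, ⟨ht0, hta⟩, rfl⟩
    have : x*y/a < x*y/t := div_lt_div_of_pos_left (by positivity) ht0 hta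
    have hba : b = x*y/a := by field_simp [← hab]; linarith [mul_comm a b, hab]
    simpa [mem_Ioi, hba] using this
  · intro hu
    have hu' : b < u := hu
    have hupos : 0 < u := lt_trans hb hu'
    refine ⟨x*y/u, ⟨by positivity, ?_⟩, by field_simp⟩
    have hba : a = x*y/b := by field_simp [← hab]; linarith [hab]
    calc x*y/u < x*y/b := div_lt_div_of_pos_left (by positivity) hb hu'
    _ = a := hba.symm

lemma sub_deriv {a : ℝ} : ∀ t ∈ Ioo (0:ℝ) a,
    HasDerivWithinAt (fun t : ℝ => x*y/t) (-(x*y)/t^2) (Ioo 0 a) t := by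
  intro t ht
  have ht0 : t ≠ 0 := ne_of_gt ht.1
  have : HasDerivAt (fun t : ℝ => x*y/t) (-(x*y)/t^2) t := by
    simpa [div_eq_mul_inv, neg_div] using (hasDerivAt_inv ht0).const_mul (x*y)
  exact this.hasDerivWithinAt

include hx hy in
lemma sub_inj {a : ℝ} : InjOn (fun t : ℝ => x*y/t) (Ioo 0 a) := by
  intro s hs t ht hst
  have hs0 : s ≠ 0 := ne_of_gt hs.1
  have ht0 : t ≠ 0 := ne_of_gt ht.1
  have hxy : x*y ≠ 0 := by positivity
  simp only at hst
  rw [div_eq_div_iff hs0 ht0] at hst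
  exact mul_right_cancel₀ hxy (by linarith [hst] : s * (x*y) = t * (x*y))

include hx hy in
lemma sub_integral {a b : ℝ} (ha : 0 < a) (hb : 0 < b) (hab : a * b = x * y) :
    ∫ t in Ioi b, gg x y t = ∫ t in Ioo 0 a, JJ x y t := by
  rw [← sub_image hx hy ha hb hab,
    integral_image_eq_integral_abs_deriv_smul measurableSet_Ioo sub_deriv (sub_inj hx hy)]
  apply setIntegral_congr_fun measurableSet_Ioo
  intro t ht
  simp only [smul_eq_mul]
  exact key_pointwise hx hy ht.1

include hx hy in
lemma gg_int_Ioi {a b : ℝ} (ha : 0 < a) (hb : 0 < b) (hab : a * b = x * y) :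
    IntegrableOn (gg x y) (Ioi b) := by
  rw [← sub_image hx hy ha hb hab,
    integrableOn_image_iff_integrableOn_abs_deriv_smul measurableSet_Ioo sub_deriv (sub_inj hx hy)]
  have : IntegrableOn (JJ x y) (Ioo 0 a) := by
    exact (((JJ_contOn hx hy).mono (Icc_subset_Ici_self : Icc (0:ℝ) a ⊆ Ici 0)).integrableOn_Icc).mono_set
      Ioo_subset_Icc_self
  apply this.congr_fun _ measurableSet_Ioo
  intro t ht
  simp only [smul_eq_mul]
  exact (key_pointwise hx hy ht.1).symm

include hx hy in
lemma hh_deriv {t : ℝ} (ht : 0 < t) :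
    HasDerivAt (hh x y) (JJ x y t - gg x y t) t := by
  have htx : 0 < t + x := by linarith
  have hty : 0 < t + y := by linarith
  have hst : (0:ℝ) < Real.sqrt t := Real.sqrt_pos.mpr ht
  have hsx : (0:ℝ) < Real.sqrt (t+x) := Real.sqrt_pos.mpr htx
  have hsy : (0:ℝ) < Real.sqrt (t+y) := Real.sqrt_pos.mpr hty
  have d1 : HasDerivAt (fun t : ℝ => Real.sqrt t) (1/(2*Real.sqrt t)) t :=
    Real.hasDerivAt_sqrt (ne_of_gt ht)
  have d2 : HasDerivAt (fun s : ℝ => (Real.sqrt (s+x))⁻¹)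
      (-(1/(2*Real.sqrt (t+x))) / (Real.sqrt (t+x))^2) t := by
    have : HasDerivAt (fun s : ℝ => Real.sqrt (s+x)) (1/(2*Real.sqrt (t+x))) t := by
      simpa using ((hasDerivAt_id t).add_const x).sqrt (by positivity)
    exact this.inv (ne_of_gt hsx)
  have d3 : HasDerivAt (fun s : ℝ => (Real.sqrt (s+y))⁻¹)
      (-(1/(2*Real.sqrt (t+y))) / (Real.sqrt (t+y))^2) t := by
    have : HasDerivAt (fun s : ℝ => Real.sqrt (s+y)) (1/(2*Real.sqrt (t+y))) t := by
      simpa using ((hasDerivAt_id t).add_const y).sqrt (by positivity)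
    exact this.inv (ne_of_gt hsy)
  have d : HasDerivAt (hh x y)
      (-(2/y) * ((1/(2*Real.sqrt t) * (Real.sqrt (t+x))⁻¹
        + Real.sqrt t * (-(1/(2*Real.sqrt (t+x))) / (Real.sqrt (t+x))^2)) * (Real.sqrt (t+y))⁻¹
        + Real.sqrt t * (Real.sqrt (t+x))⁻¹
          * (-(1/(2*Real.sqrt (t+y))) / (Real.sqrt (t+y))^2))) t := by
    exact (((d1.mul d2).mul d3).const_mul _)
  convert d using 1
  have sq_t : Real.sqrt t ^ 2 = t := Real.sq_sqrt ht.le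
  have sq_x : Real.sqrt (t+x) ^ 2 = t + x := Real.sq_sqrt htx.le
  have sq_y : Real.sqrt (t+y) ^ 2 = t + y := Real.sq_sqrt hty.le
  rw [JJ, gg, Real.sqrt_mul ht.le]
  set a := Real.sqrt t with hadef
  set b := Real.sqrt (t+x) with hbdef
  set c := Real.sqrt (t+y) with hcdef
  rw [show t + x = b^2 from sq_x.symm, show t + y = c^2 from sq_y.symm,
    show y = c^2 - a^2 by rw [sq_y, sq_t]; ring]
  have hay : c^2 - a^2 ≠ 0 := by
    have h' : c^2 - a^2 = y := by rw [sq_y, sq_t]; ring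
    rw [h']; exact ne_of_gt hy
  field_simp
  ring

include hx hy in
lemma ftc_step {l : ℝ} (hl : 0 < l) :
    ∫ t in Ioo 0 l, (JJ x y t - gg x y t) = hh x y l := by
  have hint : IntervalIntegrable (fun t => JJ x y t - gg x y t) volume 0 l := by
    apply IntervalIntegrable.sub
    · apply ContinuousOn.intervalIntegrable
      apply (JJ_contOn hx hy).mono
      rw [uIcc_of_le hl.le]
      exact Icc_subset_Ici_self
    · rw [intervalIntegrable_iff_integrableOn_Ioc_of_le hl.le]
      exact gg_int_Ioc hx hy l
  have h0 : Filter.Tendsto (hh x y) (nhdsWithin 0 (Ioi 0)) (nhds 0) := by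
    have hc : ContinuousWithinAt (hh x y) (Ici 0) 0 := (hh_cont hx hy) 0 (by simp)
    have h00 : hh x y 0 = 0 := by simp [hh]
    have := hc.tendsto
    rw [h00] at this
    exact this.mono_left (nhdsWithin_mono 0 Ioi_subset_Ici_self)
  have h1 : Filter.Tendsto (hh x y) (nhdsWithin l (Iio l)) (nhds (hh x y l)) := by
    have hc : ContinuousAt (hh x y) l := by
      have : Ici (0:ℝ) ∈ nhds l := by
        exact Filter.mem_of_superset (Ioi_mem_nhds hl) Ioi_subset_Ici_self
      exact ((hh_cont hx hy) l (by simp [hl.le])).continuousAt this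
    exact hc.tendsto.mono_left nhdsWithin_le_nhds
  have := intervalIntegral.integral_eq_sub_of_hasDerivAt_of_tendsto hl
    (fun t ht => hh_deriv hx hy ht.1) hint h0 h1
  rw [intervalIntegral.integral_of_le hl.le, integral_Ioc_eq_integral_Ioo] at this
  rw [this, sub_zero]

include hx hy in
lemma JJ_int {l : ℝ} : IntegrableOn (JJ x y) (Ioo 0 l) :=
  (((JJ_contOn hx hy).mono (Icc_subset_Ici_self : Icc (0:ℝ) l ⊆ Ici 0)).integrableOn_Icc).mono_set
    Ioo_subset_Icc_self

lemma RD_shift (c : ℝ) : RD c (x+c) (y+c) = (3/2) * ∫ t in Ioi c, gg x y t := by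
  rw [RD]
  congr 1
  calc (∫ t in Ioi (0:ℝ),
        (Real.sqrt ((t+c)*(t+(x+c))))⁻¹ * ((t+(y+c)) * Real.sqrt (t+(y+c)))⁻¹)
      = ∫ t in Ioi (0:ℝ), gg x y (t+c) := by
        apply setIntegral_congr_fun measurableSet_Ioi
        intro t _
        simp only [gg]
        ring_nf
    _ = ∫ t in Ioi c, gg x y t := by
        have hp : (·+c) ⁻¹' Ioi c = Ioi (0:ℝ) := by ext t; simp
        rw [← hp]
        exact (measurePreserving_add_right volume c).setIntegral_preimage_emb
          (MeasurableEquiv.addRight c).measurableEmbedding _ _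

lemma RD_zero : RD 0 x y = (3/2) * ∫ t in Ioi 0, gg x y t := by
  rw [RD]
  congr 1
  apply setIntegral_congr_fun measurableSet_Ioi
  intro t _
  simp only [gg]
  norm_num

end aux

theorem stmt14 (x y l m : ℝ) (hx : 0 < x) (hy : 0 < y)
    (hl : 0 < l) (hm : 0 < m) (hlm : l * m = x * y) :
    RD l (x + l) (y + l) + RD m (x + m) (y + m) =
      RD 0 x y - 3 / (y * Real.sqrt (x + y + l + m)) := by
  have hml : m * l = x * y := by rw [mul_comm]; exact hlm
  rw [RD_shift l, RD_shift m, RD_zero]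
  rw [sub_integral hx hy hl hm hlm]
  have hsplit : (∫ t in Ioi (0:ℝ), gg x y t)
      = (∫ t in Ioo 0 l, gg x y t) + ∫ t in Ioi l, gg x y t := by
    rw [← Ioc_union_Ioi_eq_Ioi hl.le,
      setIntegral_union (Ioc_disjoint_Ioi le_rfl) measurableSet_Ioi
        (gg_int_Ioc hx hy l) (gg_int_Ioi hx hy hm hl hml),
      integral_Ioc_eq_integral_Ioo]
  rw [hsplit]
  have hdiff : (∫ t in Ioo 0 l, JJ x y t) - (∫ t in Ioo 0 l, gg x y t) = hh x y l := by
    rw [← integral_sub (JJ_int hx hy) ((gg_int_Ioc hx hy l).mono_set Ioo_subset_Ioc_self)]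
    exact ftc_step hx hy hl
  have hS : 0 < x + y + l + m := by linarith
  have hsq : Real.sqrt (l+x) * Real.sqrt (l+y) = Real.sqrt l * Real.sqrt (x+y+l+m) := by
    rw [← Real.sqrt_mul (by linarith), ← Real.sqrt_mul hl.le]
    congr 1
    nlinarith [hlm]
  have hnum : (3/2) * hh x y l = -(3 / (y * Real.sqrt (x + y + l + m))) := by
    rw [hh]
    have h1 : (0:ℝ) < Real.sqrt l := Real.sqrt_pos.mpr hl
    have h2 : (0:ℝ) < Real.sqrt (l+x) := Real.sqrt_pos.mpr (by linarith)
    have h3 : (0:ℝ) < Real.sqrt (l+y) := Real.sqrt_pos.mpr (by linarith)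
    have h4 : (0:ℝ) < Real.sqrt (x+y+l+m) := Real.sqrt_pos.mpr hS
    field_simp
    nlinarith [hsq, h1, h4, hy]
  linarith [hdiff, hnum]
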